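/- Let d be a positive integer, k ∈ ℕ, K > 0, s ∈ [0, d), L > 1, and let r be an integer with r ≤ 0. Let C : ℝ^d × ℝ^d → ℝ be a measurable function satisfying C(y, z) ≥ K^{-1} |y − z|^{-s} ⟨y⟩^{-k} ⟨z⟩^{-k} for all y ≠ z in ℝ^d. Let ρ : ℝ^d → ℝ be a continuous nonnegative function supported in the closed unit ball B̄(0,1) with ∫_{ℝ^d} ρ = 1, and set ρ_r(x) := L^{-rd} ρ(L^{-r} x). Then for every x ∈ ℝ^d, ∫∫_{(y,z): y ≠ z} ρ_r(x − y) ρ_r(x − z) C(y, z) dy dz ≥ K̃ · ⟨x⟩^{-2k} · L^{-rs}, where K̃ := K^{-1} · 3^{-k} · ∫∫_{(u,v): u ≠ v} ρ(u) ρ(v) |u − v|^{-s} du dv, and K̃ > 0. -/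

import Mathlib

open MeasureTheory

open Set Real Module in
private lemma riesz_finite {E : Type*} [NormedAddCommGroup E] [NormedSpace ℝ E]
    [FiniteDimensional ℝ E]
    [MeasurableSpace E] [BorelSpace E] (μ : Measure E) [μ.IsAddHaarMeasure]
    {s : ℝ} (hs0 : 0 ≤ s) (hsd : s < finrank ℝ E) (R : ℝ) :
    ∫⁻ x in Metric.closedBall (0:E) R, ENNReal.ofReal (‖x‖ ^ (-s)) ∂μ < ⊤ := by
  rcases eq_or_lt_of_le hs0 with rfl | hs
  · simp only [neg_zero, Real.rpow_zero, ENNReal.ofReal_one]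
    simpa using measure_closedBall_lt_top (x := (0:E)) (r := R)
  set n := finrank ℝ E with hn
  have hns : (1:ℝ) < n / s := (one_lt_div hs).2 hsd
  have key := lintegral_eq_lintegral_meas_le (μ.restrict (Metric.closedBall 0 R))
      (f := fun x => ‖x‖ ^ (-s)) (Filter.Eventually.of_forall fun x => rpow_nonneg (norm_nonneg _) _)
      ((by fun_prop : Measurable (fun x : E => ‖x‖ ^ (-s))).aemeasurable)
  rw [key]
  set F := fun t : ℝ => (μ.restrict (Metric.closedBall 0 R)) {a : E | t ≤ ‖a‖ ^ (-s)} with hF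
  have hb : ∀ t ∈ Ioi (1:ℝ), F t ≤ ENNReal.ofReal (t ^ (-(n/s))) * μ (Metric.ball 0 1) := by
    intro t ht
    have ht1 : (1:ℝ) < t := ht
    have ht0 : (0:ℝ) < t := lt_trans one_pos ht1
    have h1 : {a : E | t ≤ ‖a‖ ^ (-s)} ⊆ Metric.closedBall 0 (t ^ (-s⁻¹)) := by
      intro a ha
      simp only [mem_setOf_eq] at ha
      have ha0 : a ≠ 0 := by
        rintro rfl
        rw [norm_zero, Real.zero_rpow (by simpa using hs.ne')] at ha
        linarith
      have hna : 0 < ‖a‖ := norm_pos_iff.2 ha0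
      rw [Metric.mem_closedBall, dist_zero_right]
      have h2 : ‖a‖ ^ s ≤ t⁻¹ := by
        rw [Real.rpow_neg (norm_nonneg a)] at ha
        exact (le_inv_comm₀ ht0 (rpow_pos_of_pos hna s)).1 ha
      calc ‖a‖ = (‖a‖ ^ s) ^ s⁻¹ := (Real.rpow_rpow_inv (norm_nonneg a) hs.ne').symm
      _ ≤ (t⁻¹) ^ s⁻¹ := Real.rpow_le_rpow (rpow_nonneg (norm_nonneg a) s) h2 (inv_nonneg.2 hs.le)
      _ = t ^ (-s⁻¹) := by rw [← Real.rpow_neg_one, ← Real.rpow_mul ht0.le]; ring_nf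
    calc F t ≤ μ (Metric.closedBall 0 (t ^ (-s⁻¹))) :=
          le_trans (Measure.restrict_apply_le _ _) (measure_mono h1)
    _ = ENNReal.ofReal ((t ^ (-s⁻¹)) ^ n) * μ (Metric.ball 0 1) :=
          Measure.addHaar_closedBall μ 0 (rpow_nonneg ht0.le _)
    _ = ENNReal.ofReal (t ^ (-(n/s))) * μ (Metric.ball 0 1) := by
          rw [← Real.rpow_natCast (t ^ (-s⁻¹)) n, ← Real.rpow_mul ht0.le]
          congr 2
          field_simp
  calc ∫⁻ t in Ioi 0, F t ≤ ∫⁻ t in Ioc 0 1 ∪ Ioi 1, F t :=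
        lintegral_mono_set Ioi_subset_Ioc_union_Ioi
  _ ≤ (∫⁻ t in Ioc 0 1, F t) + ∫⁻ t in Ioi 1, F t := lintegral_union_le _ _ _
  _ < ⊤ := by
      refine ENNReal.add_lt_top.2 ⟨?_, ?_⟩
      · have : ∀ t ∈ Ioc (0:ℝ) 1, F t ≤ μ (Metric.closedBall 0 R) := fun t _ =>
          le_trans (measure_mono (subset_univ _)) (by rw [Measure.restrict_apply_univ])
        refine lt_of_le_of_lt (setLIntegral_mono' measurableSet_Ioc this) ?_
        rw [setLIntegral_const]
        exact ENNReal.mul_lt_top measure_closedBall_lt_top (by simp)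
      · refine lt_of_le_of_lt (setLIntegral_mono' measurableSet_Ioi hb) ?_
        rw [lintegral_mul_const' _ _ measure_ball_lt_top.ne]
        refine ENNReal.mul_lt_top ?_ measure_ball_lt_top
        exact IntegrableOn.setLIntegral_lt_top (integrableOn_Ioi_rpow_of_lt (by linarith) one_pos)

private lemma lintegral_comp_smul_haar {E : Type*} [NormedAddCommGroup E] [NormedSpace ℝ E]
    [FiniteDimensional ℝ E] [MeasurableSpace E] [BorelSpace E] (μ : Measure E)
    [μ.IsAddHaarMeasure] (f : E → ENNReal) (hf : Measurable f) {R : ℝ} (hR : R ≠ 0) :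
    ∫⁻ x, f (R • x) ∂μ = ENNReal.ofReal |(R ^ Module.finrank ℝ E)⁻¹| * ∫⁻ x, f x ∂μ := by
  rw [← lintegral_map hf (measurable_const_smul R), Measure.map_addHaar_smul μ hR,
    lintegral_smul_measure, smul_eq_mul]

/-- The "inhomogeneous norm" (Japanese bracket) `⟨y⟩ = (1 + |y|²)^{1/2}`. -/
noncomputable def jb {n : ℕ} (y : EuclideanSpace ℝ (Fin n)) : ℝ :=
  (1 + ‖y‖ ^ 2) ^ ((1 : ℝ) / 2)

private lemma jb_pos {n : ℕ} (y : EuclideanSpace ℝ (Fin n)) : 0 < jb y :=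
  Real.rpow_pos_of_pos (by positivity) _

private lemma jb_bound {n : ℕ} (x y : EuclideanSpace ℝ (Fin n)) (h : ‖x - y‖ ≤ 1) (k : ℝ)
    (hk : 0 ≤ k) : 3 ^ (-k/2) * jb x ^ (-k) ≤ jb y ^ (-k) := by
  have hxy : ‖y‖ ≤ ‖x‖ + 1 := by
    calc ‖y‖ = ‖x - (x - y)‖ := by rw [sub_sub_cancel]
    _ ≤ ‖x‖ + ‖x - y‖ := norm_sub_le _ _
    _ ≤ ‖x‖ + 1 := by linarith
  have hb : jb y ≤ 3 ^ ((1:ℝ)/2) * jb x := by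
    have h1 : 1 + ‖y‖ ^ 2 ≤ 3 * (1 + ‖x‖ ^ 2) := by
      nlinarith [sq_nonneg (‖x‖ - 1), norm_nonneg y, norm_nonneg x, sq_nonneg (‖x‖ + 1 - ‖y‖)]
    calc jb y = (1 + ‖y‖ ^ 2) ^ ((1:ℝ)/2) := rfl
    _ ≤ (3 * (1 + ‖x‖ ^ 2)) ^ ((1:ℝ)/2) := Real.rpow_le_rpow (by positivity) h1 (by norm_num)
    _ = 3 ^ ((1:ℝ)/2) * jb x := Real.mul_rpow (by norm_num) (by positivity)
  calc 3 ^ (-k/2) * jb x ^ (-k) = (3 ^ ((1:ℝ)/2) * jb x) ^ (-k) := by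
        rw [Real.mul_rpow (by positivity) (jb_pos x).le, ← Real.rpow_mul (by norm_num : (0:ℝ) ≤ 3)]
        ring_nf
  _ ≤ jb y ^ (-k) := Real.rpow_le_rpow_of_nonpos (jb_pos y) hb (by linarith)
set_option maxHeartbeats 1000000 in
/-- Lower bound for the mollified OPE normalization integral.  If
`C(y,z) ≥ K⁻¹ |y−z|^{-s} ⟨y⟩^{-k} ⟨z⟩^{-k}` off the diagonal, `ρ` is a continuous
nonnegative mollifier supported in the unit ball with `∫ρ = 1`, and
`ρ_r(x) = L^{-rd} ρ(L^{-r}x)` with `r ≤ 0`, `L > 1`, then for all `x`,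
`∬_{y≠z} ρ_r(x−y) ρ_r(x−z) C(y,z) ≥ K̃ ⟨x⟩^{-2k} L^{-rs}` where
`K̃ = K⁻¹ 3^{-k} ∬_{u≠v} ρ(u)ρ(v)|u−v|^{-s} > 0`. -/
theorem stmt12 (d k : ℕ) (hd : 0 < d) (K : ℝ) (hK : 0 < K)
    (s : ℝ) (hs0 : 0 ≤ s) (hsd : s < d) (L : ℝ) (hL : 1 < L) (r : ℤ) (hr : r ≤ 0)
    (C : EuclideanSpace ℝ (Fin d) → EuclideanSpace ℝ (Fin d) → ℝ)
    (hCm : Measurable fun q : EuclideanSpace ℝ (Fin d) × EuclideanSpace ℝ (Fin d) =>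
      C q.1 q.2)
    (hC : ∀ y z : EuclideanSpace ℝ (Fin d), y ≠ z →
      K⁻¹ * ‖y - z‖ ^ (-s) * jb y ^ (-(k : ℝ)) * jb z ^ (-(k : ℝ)) ≤ C y z)
    (ρ : EuclideanSpace ℝ (Fin d) → ℝ) (hρc : Continuous ρ) (hρ0 : ∀ x, 0 ≤ ρ x)
    (hρsupp : Function.support ρ ⊆ Metric.closedBall 0 1) (hρint : ∫ x, ρ x = 1) :
    (0 < K⁻¹ * 3 ^ (-(k : ℝ)) *
        ∫ q in {q : EuclideanSpace ℝ (Fin d) × EuclideanSpace ℝ (Fin d) | q.1 ≠ q.2},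
          ρ q.1 * ρ q.2 * ‖q.1 - q.2‖ ^ (-s)) ∧
    ∀ x : EuclideanSpace ℝ (Fin d),
      ENNReal.ofReal
        ((K⁻¹ * 3 ^ (-(k : ℝ)) *
          ∫ q in {q : EuclideanSpace ℝ (Fin d) × EuclideanSpace ℝ (Fin d) | q.1 ≠ q.2},
            ρ q.1 * ρ q.2 * ‖q.1 - q.2‖ ^ (-s)) *
          jb x ^ (-(2 * k : ℝ)) * L ^ (-(r : ℝ) * s))
      ≤ ∫⁻ q in {q : EuclideanSpace ℝ (Fin d) × EuclideanSpace ℝ (Fin d) | q.1 ≠ q.2},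
          ENNReal.ofReal
            ((L ^ (-(r : ℝ) * d) * ρ ((L ^ (-(r : ℝ))) • (x - q.1))) *
             (L ^ (-(r : ℝ) * d) * ρ ((L ^ (-(r : ℝ))) • (x - q.2))) * C q.1 q.2) := by
  classical
  haveI : Nonempty (Fin d) := ⟨⟨0, hd⟩⟩
  haveI hPH : (volume : Measure (EuclideanSpace ℝ (Fin d) × EuclideanSpace ℝ (Fin d))).IsAddHaarMeasure := by
    rw [MeasureTheory.Measure.volume_eq_prod]; exact MeasureTheory.Measure.prod.instIsAddHaarMeasure _ _
  set S : Set (EuclideanSpace ℝ (Fin d) × EuclideanSpace ℝ (Fin d)) := {q | q.1 ≠ q.2} with hSdef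
  set g : EuclideanSpace ℝ (Fin d) × EuclideanSpace ℝ (Fin d) → ℝ :=
    fun q => ρ q.1 * ρ q.2 * ‖q.1 - q.2‖ ^ (-s) with hgdef
  -- basic measurability
  have hdm : MeasurableSet {q : EuclideanSpace ℝ (Fin d) × EuclideanSpace ℝ (Fin d) | q.1 = q.2} :=
    measurableSet_eq_fun measurable_fst measurable_snd
  have hSm : MeasurableSet S := by
    have : S = {q : EuclideanSpace ℝ (Fin d) × EuclideanSpace ℝ (Fin d) | q.1 = q.2}ᶜ := rfl
    rw [this]; exact hdm.compl
  have hdiag0 : (volume : Measure (EuclideanSpace ℝ (Fin d) × EuclideanSpace ℝ (Fin d)))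
      {q | q.1 = q.2} = 0 := by
    rw [MeasureTheory.Measure.volume_eq_prod, MeasureTheory.Measure.prod_apply hdm]
    have h1 : ∀ u : EuclideanSpace ℝ (Fin d),
        (Prod.mk u ⁻¹' {q : EuclideanSpace ℝ (Fin d) × EuclideanSpace ℝ (Fin d) | q.1 = q.2}) = {u} := by
      intro u; ext v; simp [eq_comm]
    simp [h1]
  have hSae : S =ᵐ[volume] Set.univ := by
    rw [ae_eq_univ]
    have : Sᶜ = {q : EuclideanSpace ℝ (Fin d) × EuclideanSpace ℝ (Fin d) | q.1 = q.2} := by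
      ext q; simp [hSdef]
    rw [this]; exact hdiag0
  have hgm : Measurable g := by
    have := hρc.measurable
    fun_prop
  have hg0 : ∀ q, 0 ≤ g q := fun q =>
    mul_nonneg (mul_nonneg (hρ0 _) (hρ0 _)) (Real.rpow_nonneg (norm_nonneg _) _)
  have hcs : HasCompactSupport ρ :=
    HasCompactSupport.intro (isCompact_closedBall (0:EuclideanSpace ℝ (Fin d)) 1)
      (fun x hx => by
        by_contra h
        exact hx (hρsupp (Function.mem_support.2 h)))
  have hρInt : Integrable ρ := hρc.integrable_of_hasCompactSupport hcs
  obtain ⟨M, hM⟩ : ∃ M : ℝ, ∀ x, ρ x ≤ M := by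
    obtain ⟨M, hM⟩ := hρc.bounded_above_of_compact_support hcs
    exact ⟨M, fun x => (le_abs_self _).trans (by simpa using hM x)⟩
  have hM0 : 0 ≤ M := le_trans (hρ0 0) (hM 0)
  -- finiteness of the double Riesz integral
  have hA : ∫⁻ w in Metric.closedBall (0:EuclideanSpace ℝ (Fin d)) 2,
      ENNReal.ofReal (‖w‖ ^ (-s)) < ⊤ :=
    riesz_finite volume hs0 (by rw [finrank_euclideanSpace_fin]; exact_mod_cast hsd) 2
  have Hfin : ∫⁻ q : EuclideanSpace ℝ (Fin d) × EuclideanSpace ℝ (Fin d),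
      ENNReal.ofReal (g q) < ⊤ := by
    set A := ∫⁻ w in Metric.closedBall (0:EuclideanSpace ℝ (Fin d)) 2,
      ENNReal.ofReal (‖w‖ ^ (-s)) with hAdef
    have inner : ∀ u : EuclideanSpace ℝ (Fin d), ∫⁻ v, ENNReal.ofReal (g (u, v))
        ≤ ENNReal.ofReal (ρ u) * (ENNReal.ofReal M * A) := by
      intro u
      have hpoint : ∀ v, ENNReal.ofReal (g (u, v)) ≤
          ENNReal.ofReal (ρ u) * (ENNReal.ofReal M *
            (Metric.closedBall u 2).indicator
              (fun v => ENNReal.ofReal (‖u - v‖ ^ (-s))) v) := by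
        intro v
        by_cases h1 : ρ u = 0
        · simp [hgdef, h1]
        by_cases h2 : ρ v = 0
        · simp [hgdef, h2]
        have m1 := hρsupp (Function.mem_support.2 h1)
        have m2 := hρsupp (Function.mem_support.2 h2)
        have hin : v ∈ Metric.closedBall u 2 := by
          rw [Metric.mem_closedBall] at m1 m2 ⊢
          calc dist v u ≤ dist v 0 + dist 0 u := dist_triangle _ _ _
          _ ≤ 2 := by rw [dist_comm (0:EuclideanSpace ℝ (Fin d)) u]; linarith
        rw [Set.indicator_of_mem hin]
        rw [show g (u,v) = ρ u * ρ v * ‖u - v‖ ^ (-s) from rfl]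
        rw [ENNReal.ofReal_mul (mul_nonneg (hρ0 u) (hρ0 v)), ENNReal.ofReal_mul (hρ0 u), mul_assoc]
        exact mul_le_mul_of_nonneg_left (mul_le_mul_of_nonneg_right (ENNReal.ofReal_le_ofReal (hM v)) (by positivity)) (by positivity)
      calc ∫⁻ v, ENNReal.ofReal (g (u, v)) ≤ _ := lintegral_mono hpoint
      _ = ENNReal.ofReal (ρ u) * (ENNReal.ofReal M *
            ∫⁻ v, (Metric.closedBall u 2).indicator
              (fun v => ENNReal.ofReal (‖u - v‖ ^ (-s))) v) := by
          rw [lintegral_const_mul' _ _ ENNReal.ofReal_ne_top,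
            lintegral_const_mul' _ _ ENNReal.ofReal_ne_top]
      _ = ENNReal.ofReal (ρ u) * (ENNReal.ofReal M * A) := by
          congr 2
          have heq : ∀ v : EuclideanSpace ℝ (Fin d),
              (Metric.closedBall u 2).indicator
                (fun v => ENNReal.ofReal (‖u - v‖ ^ (-s))) v
              = (Metric.closedBall (0:EuclideanSpace ℝ (Fin d)) 2).indicator
                (fun w => ENNReal.ofReal (‖w‖ ^ (-s))) (v + -u) := by
            intro v
            have hmem : v ∈ Metric.closedBall u 2 ↔
                (v + -u) ∈ Metric.closedBall (0:EuclideanSpace ℝ (Fin d)) 2 := by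
              simp [Metric.mem_closedBall, dist_eq_norm, sub_eq_add_neg]
            by_cases hv : v ∈ Metric.closedBall u 2
            · rw [Set.indicator_of_mem hv, Set.indicator_of_mem (hmem.1 hv)]
              have : ‖u - v‖ = ‖v + -u‖ := by rw [norm_sub_rev, sub_eq_add_neg]
              rw [this]
            · rw [Set.indicator_of_notMem hv,
                Set.indicator_of_notMem (fun hc => hv (hmem.2 hc))]
          rw [lintegral_congr heq, lintegral_add_right_eq_self _ (-u),
            lintegral_indicator measurableSet_closedBall, hAdef]
    rw [MeasureTheory.Measure.volume_eq_prod, lintegral_prod _ hgm.ennreal_ofReal.aemeasurable]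
    calc ∫⁻ u, ∫⁻ v, ENNReal.ofReal (g (u,v))
        ≤ ∫⁻ u, ENNReal.ofReal (ρ u) * (ENNReal.ofReal M * A) := lintegral_mono inner
    _ = (∫⁻ u, ENNReal.ofReal (ρ u)) * (ENNReal.ofReal M * A) :=
        lintegral_mul_const' _ _ (ENNReal.mul_lt_top ENNReal.ofReal_lt_top hA).ne
    _ < ⊤ := by
        rw [← ofReal_integral_eq_lintegral_ofReal hρInt (Filter.Eventually.of_forall hρ0), hρint]
        exact ENNReal.mul_lt_top (by simp) (ENNReal.mul_lt_top ENNReal.ofReal_lt_top hA)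
  have hgInt : Integrable g := by
    refine ⟨hgm.aestronglyMeasurable, ?_⟩
    rw [hasFiniteIntegral_iff_ofReal (Filter.Eventually.of_forall hg0)]
    exact Hfin
  set I : ℝ := ∫ q in S, g q with hIdef
  have hIeq : I = ∫ q, g q := by
    rw [hIdef, setIntegral_congr_set hSae, setIntegral_univ]
  have hSc0 : (volume : Measure (EuclideanSpace ℝ (Fin d) × EuclideanSpace ℝ (Fin d))) Sᶜ = 0 := by
    have : Sᶜ = {q : EuclideanSpace ℝ (Fin d) × EuclideanSpace ℝ (Fin d) | q.1 = q.2} := by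
      ext q; simp [hSdef]
    rw [this]; exact hdiag0
  have hIpos : 0 < I := by
    rw [hIeq, integral_pos_iff_support_of_nonneg hg0 hgInt]
    have hsupp : (Function.support ρ) ×ˢ (Function.support ρ) ∩ S ⊆ Function.support g := by
      rintro ⟨u, v⟩ ⟨⟨hu, hv⟩, huv⟩
      have huv' : u ≠ v := huv
      apply ne_of_gt
      exact mul_pos (mul_pos ((hρ0 u).lt_of_ne (Ne.symm hu)) ((hρ0 v).lt_of_ne (Ne.symm hv)))
        (Real.rpow_pos_of_pos (norm_pos_iff.2 (sub_ne_zero.2 huv')) _)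
    have hρsupp_pos : 0 < volume (Function.support ρ) := by
      rcases eq_or_lt_of_le (zero_le : 0 ≤ volume (Function.support ρ)) with h0 | h
      · exfalso
        have hz : ρ =ᵐ[volume] 0 := by
          rw [Filter.EventuallyEq, ae_iff]
          simpa [Function.support] using h0.symm
        have := integral_congr_ae hz
        rw [hρint] at this
        simp at this
      · exact h
    have hp : 0 < volume ((Function.support ρ) ×ˢ (Function.support ρ) ∩ S) := by
      rw [measure_inter_conull hSc0, MeasureTheory.Measure.volume_eq_prod,
        MeasureTheory.Measure.prod_prod]
      exact ENNReal.mul_pos hρsupp_pos.ne' hρsupp_pos.ne'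
    exact lt_of_lt_of_le hp (measure_mono hsupp)
  have hIlint : ∫⁻ q in S, ENNReal.ofReal (g q) = ENNReal.ofReal I := by
    rw [setLIntegral_congr hSae, Measure.restrict_univ, hIeq,
      ofReal_integral_eq_lintegral_ofReal hgInt (Filter.Eventually.of_forall hg0)]
  constructor
  · exact mul_pos (mul_pos (inv_pos.2 hK)
      (Real.rpow_pos_of_pos (by norm_num) _)) hIpos
  intro x
  have hL0 : (0:ℝ) < L := lt_trans one_pos hL
  set t : ℝ := L ^ (-(r:ℝ)) with htdef
  have ht0 : 0 < t := Real.rpow_pos_of_pos hL0 _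
  have hrr : (0:ℝ) ≤ -(r:ℝ) := by
    have : (r:ℝ) ≤ 0 := by exact_mod_cast hr
    linarith
  have ht1 : 1 ≤ t := Real.one_le_rpow hL.le hrr
  set D : ℝ := L ^ (-(r:ℝ) * (d:ℝ)) with hDdef
  have hD : D = t ^ (d:ℕ) := by
    rw [hDdef, htdef, ← Real.rpow_natCast (L ^ (-(r:ℝ))) d, ← Real.rpow_mul hL0.le]
  have hD0 : 0 ≤ D := by rw [hD]; positivity
  have hts : t ^ s = L ^ (-(r:ℝ) * s) := by rw [htdef, ← Real.rpow_mul hL0.le]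
  set c0 : ℝ := K⁻¹ * 3 ^ (-(k:ℝ)) * jb x ^ (-(2 * k:ℝ)) with hc0def
  have hc00 : 0 ≤ c0 := by
    rw [hc0def]
    exact mul_nonneg (mul_nonneg (inv_nonneg.2 hK.le)
      (Real.rpow_nonneg (by norm_num) _)) (Real.rpow_nonneg (jb_pos x).le _)
  -- pointwise bound
  have hpt : ∀ q ∈ S, c0 * ((D * ρ (t • (x - q.1))) * (D * ρ (t • (x - q.2))) *
        ‖q.1 - q.2‖ ^ (-s))
      ≤ (D * ρ (t • (x - q.1))) * (D * ρ (t • (x - q.2))) * C q.1 q.2 := by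
    rintro ⟨y, z⟩ hq
    have hyz : y ≠ z := hq
    by_cases h1 : ρ (t • (x - y)) = 0
    · simp [h1]
    by_cases h2 : ρ (t • (x - z)) = 0
    · simp [h2]
    have hxy : ‖x - y‖ ≤ 1 := by
      have hm := hρsupp (Function.mem_support.2 h1)
      rw [Metric.mem_closedBall, dist_zero_right, norm_smul, Real.norm_eq_abs,
        abs_of_pos ht0] at hm
      nlinarith [norm_nonneg (x - y)]
    have hxz : ‖x - z‖ ≤ 1 := by
      have hm := hρsupp (Function.mem_support.2 h2)
      rw [Metric.mem_closedBall, dist_zero_right, norm_smul, Real.norm_eq_abs,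
        abs_of_pos ht0] at hm
      nlinarith [norm_nonneg (x - z)]
    have hj1 := jb_bound x y hxy k (Nat.cast_nonneg k)
    have hj2 := jb_bound x z hxz k (Nat.cast_nonneg k)
    have hkey : c0 * ‖y - z‖ ^ (-s) ≤ C y z := by
      refine le_trans ?_ (hC y z hyz)
      have h3 : (3:ℝ) ^ (-(k:ℝ)) * jb x ^ (-(2*k:ℝ)) ≤ jb y ^ (-(k:ℝ)) * jb z ^ (-(k:ℝ)) := by
        have e1 : (3:ℝ) ^ (-(k:ℝ)) = 3 ^ (-(k:ℝ)/2) * 3 ^ (-(k:ℝ)/2) := by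
          rw [← Real.rpow_add (by norm_num : (0:ℝ) < 3)]; ring_nf
        have e2 : jb x ^ (-(2*k:ℝ)) = jb x ^ (-(k:ℝ)) * jb x ^ (-(k:ℝ)) := by
          rw [← Real.rpow_add (jb_pos x)]; ring_nf
        calc (3:ℝ) ^ (-(k:ℝ)) * jb x ^ (-(2*k:ℝ))
            = ((3:ℝ) ^ (-(k:ℝ)/2) * jb x ^ (-(k:ℝ))) * (3 ^ (-(k:ℝ)/2) * jb x ^ (-(k:ℝ))) := by
              rw [e1, e2]; ring
        _ ≤ jb y ^ (-(k:ℝ)) * jb z ^ (-(k:ℝ)) :=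
              mul_le_mul hj1 hj2
                (mul_nonneg (Real.rpow_nonneg (by norm_num) _)
                  (Real.rpow_nonneg (jb_pos x).le _))
                (Real.rpow_nonneg (jb_pos y).le _)
      calc c0 * ‖y - z‖ ^ (-s)
          = (K⁻¹ * ‖y - z‖ ^ (-s)) * ((3:ℝ) ^ (-(k:ℝ)) * jb x ^ (-(2*k:ℝ))) := by
            rw [hc0def]; ring
      _ ≤ (K⁻¹ * ‖y - z‖ ^ (-s)) * (jb y ^ (-(k:ℝ)) * jb z ^ (-(k:ℝ))) :=
            mul_le_mul_of_nonneg_left h3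
              (mul_nonneg (inv_nonneg.2 hK.le) (Real.rpow_nonneg (norm_nonneg _) _))
      _ = K⁻¹ * ‖y - z‖ ^ (-s) * jb y ^ (-(k:ℝ)) * jb z ^ (-(k:ℝ)) := by ring
    have hab : 0 ≤ (D * ρ (t • (x - y))) * (D * ρ (t • (x - z))) :=
      mul_nonneg (mul_nonneg hD0 (hρ0 _)) (mul_nonneg hD0 (hρ0 _))
    calc c0 * ((D * ρ (t • (x - y))) * (D * ρ (t • (x - z))) * ‖y - z‖ ^ (-s))
        = ((D * ρ (t • (x - y))) * (D * ρ (t • (x - z)))) * (c0 * ‖y - z‖ ^ (-s)) := by ring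
    _ ≤ ((D * ρ (t • (x - y))) * (D * ρ (t • (x - z)))) * C y z :=
          mul_le_mul_of_nonneg_left hkey hab
    _ = (D * ρ (t • (x - y))) * (D * ρ (t • (x - z))) * C y z := by ring
  -- the scaled Riesz lintegral
  set V : EuclideanSpace ℝ (Fin d) × EuclideanSpace ℝ (Fin d) → ENNReal :=
    fun p => if p.1 = p.2 then 0 else ENNReal.ofReal (g p) with hVdef
  have hVm : Measurable V := Measurable.ite hdm measurable_const hgm.ennreal_ofReal
  have hVI : ∫⁻ p, V p = ENNReal.ofReal I := by
    have h1 : ∀ p, V p = S.indicator (fun p => ENNReal.ofReal (g p)) p := by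
      intro p
      by_cases h : p.1 = p.2
      · have : p ∉ S := by simp [hSdef, h]
        rw [Set.indicator_of_notMem this, hVdef]; simp [h]
      · have : p ∈ S := h
        rw [Set.indicator_of_mem this, hVdef]; simp [h]
    rw [lintegral_congr h1, lintegral_indicator hSm, hIlint]
  have hcoef : (0:ℝ) ≤ t ^ (d:ℕ) * t ^ (d:ℕ) * t ^ s := by positivity
  have HW : (∫⁻ q in S, ENNReal.ofReal ((D * ρ (t • (x - q.1))) * (D * ρ (t • (x - q.2))) *
      ‖q.1 - q.2‖ ^ (-s)))
      = ENNReal.ofReal (t ^ s) * ENNReal.ofReal I := by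
    have harg : ∀ q : EuclideanSpace ℝ (Fin d) × EuclideanSpace ℝ (Fin d),
        ((t • (x - q.1), t • (x - q.2)) :
          EuclideanSpace ℝ (Fin d) × EuclideanSpace ℝ (Fin d))
          = t • (x, x) + (-t) • q := by
      intro q
      have h2 : t • ((x, x) : EuclideanSpace ℝ (Fin d) × EuclideanSpace ℝ (Fin d)) + (-t) • q
          = (t • x + (-t) • q.1, t • x + (-t) • q.2) := rfl
      rw [h2, Prod.mk.injEq]
      constructor <;> module
    have hWV : ∀ q : EuclideanSpace ℝ (Fin d) × EuclideanSpace ℝ (Fin d),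
        S.indicator (fun q => ENNReal.ofReal ((D * ρ (t • (x - q.1))) *
          (D * ρ (t • (x - q.2))) * ‖q.1 - q.2‖ ^ (-s))) q
        = ENNReal.ofReal (t ^ (d:ℕ) * t ^ (d:ℕ) * t ^ s) *
            V (t • (x - q.1), t • (x - q.2)) := by
      intro q
      by_cases h : q.1 = q.2
      · have hnotS : q ∉ S := by simp [hSdef, h]
        rw [Set.indicator_of_notMem hnotS, hVdef]
        have : t • (x - q.1) = t • (x - q.2) := by rw [h]
        simp [this]
      · have hS' : q ∈ S := h
        rw [Set.indicator_of_mem hS', hVdef]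
        have hne : t • (x - q.1) ≠ t • (x - q.2) := by
          intro hc
          exact h (sub_right_injective (smul_right_injective _ ht0.ne' hc))
        simp only [hne, if_false]
        rw [← ENNReal.ofReal_mul hcoef]
        congr 1
        have e1 : ‖t • (x - q.1) - t • (x - q.2)‖ = t * ‖q.1 - q.2‖ := by
          have e0 : t • (x - q.1) - t • (x - q.2) = t • (q.2 - q.1) := by module
          rw [e0, norm_smul, Real.norm_eq_abs, abs_of_pos ht0, norm_sub_rev]
        have hss : t ^ s * t ^ (-s) = 1 := by
          rw [← Real.rpow_add ht0]; simp
        show (D * ρ (t • (x - q.1))) * (D * ρ (t • (x - q.2))) * ‖q.1 - q.2‖ ^ (-s)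
          = t ^ (d:ℕ) * t ^ (d:ℕ) * t ^ s *
            (ρ (t • (x - q.1)) * ρ (t • (x - q.2)) *
              ‖t • (x - q.1) - t • (x - q.2)‖ ^ (-s))
        rw [e1, Real.mul_rpow ht0.le (norm_nonneg _), hD]
        have harith : ∀ a b w : ℝ, t^(d:ℕ)*a*(t^(d:ℕ)*b)*w
            = t^(d:ℕ)*t^(d:ℕ)*t^s*(a*b*(t^(-s)*w)) := by
          intro a b w
          calc t^(d:ℕ)*a*(t^(d:ℕ)*b)*w = t^(d:ℕ)*t^(d:ℕ)*(a*b*w)*(t^s*t^(-s)) := by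
                rw [hss]; ring
          _ = t^(d:ℕ)*t^(d:ℕ)*t^s*(a*b*(t^(-s)*w)) := by ring
        exact harith _ _ _
    have hfr : Module.finrank ℝ (EuclideanSpace ℝ (Fin d) × EuclideanSpace ℝ (Fin d)) = d + d := by
      rw [Module.finrank_prod, finrank_euclideanSpace_fin]
    have habs : |((-t) ^ (d + d))⁻¹| = (t ^ (d + d))⁻¹ := by
      rw [Even.neg_pow ⟨d, rfl⟩, abs_inv, abs_of_pos (pow_pos ht0 _)]
    have hmeas2 : Measurable (fun p : EuclideanSpace ℝ (Fin d) × EuclideanSpace ℝ (Fin d) =>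
        V (t • (x, x) + p)) := hVm.comp (measurable_id.const_add _)
    calc (∫⁻ q in S, ENNReal.ofReal ((D * ρ (t • (x - q.1))) * (D * ρ (t • (x - q.2))) *
          ‖q.1 - q.2‖ ^ (-s)))
        = ∫⁻ q, S.indicator (fun q => ENNReal.ofReal ((D * ρ (t • (x - q.1))) *
            (D * ρ (t • (x - q.2))) * ‖q.1 - q.2‖ ^ (-s))) q := (lintegral_indicator hSm _).symm
    _ = ∫⁻ q, ENNReal.ofReal (t ^ (d:ℕ) * t ^ (d:ℕ) * t ^ s) * V (t • (x, x) + (-t) • q) := by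
          refine lintegral_congr fun q => ?_
          rw [hWV q, harg q]
    _ = ENNReal.ofReal (t ^ (d:ℕ) * t ^ (d:ℕ) * t ^ s) *
          ∫⁻ q, V (t • (x, x) + (-t) • q) := lintegral_const_mul' _ _ ENNReal.ofReal_ne_top
    _ = ENNReal.ofReal (t ^ (d:ℕ) * t ^ (d:ℕ) * t ^ s) *
          (ENNReal.ofReal ((t ^ (d + d))⁻¹) * ∫⁻ p, V (t • (x, x) + p)) := by
          rw [lintegral_comp_smul_haar volume _ hmeas2 (neg_ne_zero.2 ht0.ne'), hfr, habs]
    _ = ENNReal.ofReal (t ^ (d:ℕ) * t ^ (d:ℕ) * t ^ s) *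
          (ENNReal.ofReal ((t ^ (d + d))⁻¹) * ENNReal.ofReal I) := by
          rw [lintegral_add_left_eq_self V (t • (x, x)), hVI]
    _ = ENNReal.ofReal (t ^ s) * ENNReal.ofReal I := by
          rw [← mul_assoc, ← ENNReal.ofReal_mul hcoef]
          congr 2
          rw [← pow_add]
          field_simp
  -- final chain
  calc ENNReal.ofReal ((K⁻¹ * 3 ^ (-(k:ℝ)) * I) * jb x ^ (-(2 * k : ℝ)) * L ^ (-(r:ℝ) * s))
      = ENNReal.ofReal (c0 * (t ^ s * I)) := by
        congr 1
        rw [← hts, hc0def]; ring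
  _ = ENNReal.ofReal c0 * ENNReal.ofReal (t ^ s * I) := ENNReal.ofReal_mul hc00
  _ = ENNReal.ofReal c0 * (ENNReal.ofReal (t ^ s) * ENNReal.ofReal I) := by
        rw [ENNReal.ofReal_mul (Real.rpow_nonneg ht0.le _)]
  _ = ENNReal.ofReal c0 * ∫⁻ q in S, ENNReal.ofReal ((D * ρ (t • (x - q.1))) *
        (D * ρ (t • (x - q.2))) * ‖q.1 - q.2‖ ^ (-s)) := by rw [HW]
  _ = ∫⁻ q in S, ENNReal.ofReal (c0 * ((D * ρ (t • (x - q.1))) *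
        (D * ρ (t • (x - q.2))) * ‖q.1 - q.2‖ ^ (-s))) := by
        rw [← lintegral_const_mul' _ _ ENNReal.ofReal_ne_top]
        refine lintegral_congr fun q => ?_
        rw [ENNReal.ofReal_mul hc00]
  _ ≤ ∫⁻ q in S, ENNReal.ofReal ((D * ρ (t • (x - q.1))) * (D * ρ (t • (x - q.2))) *
        C q.1 q.2) :=
        setLIntegral_mono' hSm fun q hq => ENNReal.ofReal_le_ofReal (hpt q hq)
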